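/- Let r ∈ (0,1), let F_r : (0,r) → ℝ be integrable with F_r(ρ) > 0 for almost every ρ ∈ (0,r), and let u : ℝ → ℝ be the indicator function of the interval (−1,1). Then (A_r u)(x) < 0 for every x ∈ (1−r, 1). -/

import Mathlib

open MeasureTheory

/-- The one-dimensional adhesion operator
`(A_r u)(x) = (1/(2r²)) ∫_{−r}^{r} u(x+ξ) sign(ξ) F_r(|ξ|) dξ`. -/
noncomputable def adhesion1D (r : ℝ) (Fr : ℝ → ℝ) (u : ℝ → ℝ) (x : ℝ) : ℝ :=
  (2 * r ^ 2)⁻¹ * ∫ ξ in (-r)..r, u (x + ξ) * Real.sign ξ * Fr |ξ|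

theorem adhesion1D_indicator_neg_in_boundary_layer
    (r : ℝ) (hr : r ∈ Set.Ioo (0 : ℝ) 1)
    (Fr : ℝ → ℝ) (hF : IntegrableOn Fr (Set.Ioo 0 r))
    (hFpos : ∀ᵐ ρ ∂(volume.restrict (Set.Ioo (0 : ℝ) r)), 0 < Fr ρ)
    (u : ℝ → ℝ) (hu : u = Set.indicator (Set.Ioo (-1 : ℝ) 1) fun _ => (1 : ℝ)) :
    ∀ x ∈ Set.Ioo (1 - r) 1, adhesion1D r Fr u x < 0 := by
  obtain ⟨hr0, hr1⟩ := hr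
  intro x hx
  obtain ⟨hx1, hx2⟩ := hx
  set s : ℝ := 1 - x with hs_def
  have hs0 : 0 < s := by simp only [hs_def]; linarith
  have hsr : s < r := by simp only [hs_def]; linarith
  -- basic facts about u
  have hu1 : ∀ y : ℝ, -1 < y → y < 1 → u y = 1 := by
    intro y h1 h2
    rw [hu, Set.indicator_of_mem (Set.mem_Ioo.2 ⟨h1, h2⟩)]
  have hu0 : ∀ y : ℝ, 1 ≤ y → u y = 0 := by
    intro y h1
    rw [hu, Set.indicator_of_notMem (by simp only [Set.mem_Ioo, not_and, not_lt]; exact fun _ => h1)]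
  -- integrability of Fr on subintervals
  have hFIoc : IntegrableOn Fr (Set.Ioc 0 r) :=
    (integrableOn_Ioc_iff_integrableOn_Ioo).2 hF
  have hFint : IntervalIntegrable Fr volume 0 r := by
    rw [intervalIntegrable_iff, Set.uIoc_of_le hr0.le]
    exact hFIoc
  have hF0s : IntervalIntegrable Fr volume 0 s :=
    hFint.mono_set (by
      rw [Set.uIcc_of_le hs0.le, Set.uIcc_of_le hr0.le]
      exact Set.Icc_subset_Icc le_rfl hsr.le)
  have hFsr : IntervalIntegrable Fr volume s r :=
    hFint.mono_set (by
      rw [Set.uIcc_of_le hsr.le, Set.uIcc_of_le hr0.le]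
      exact Set.Icc_subset_Icc hs0.le le_rfl)
  set f : ℝ → ℝ := fun ξ => u (x + ξ) * Real.sign ξ * Fr |ξ| with hf_def
  -- a.e. nonzero helpers
  have hne0 : ∀ᵐ ξ : ℝ, ξ ≠ (0 : ℝ) := by
    refine ae_iff.2 ?_
    simp only [ne_eq, not_not, Set.setOf_eq_eq_singleton]
    exact Real.volume_singleton
  have hnes : ∀ᵐ ξ : ℝ, ξ ≠ s := by
    refine ae_iff.2 ?_
    simp only [ne_eq, not_not, Set.setOf_eq_eq_singleton]
    exact Real.volume_singleton
  -- left piece: f equals -Fr(-ξ) a.e. on (-r, 0]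
  have hleft_eq : ∀ᵐ ξ : ℝ, ξ ∈ Set.uIoc (-r) 0 → f ξ = -Fr (-ξ) := by
    filter_upwards [hne0] with ξ hne hmem
    rw [Set.uIoc_of_le (by linarith : (-r : ℝ) ≤ 0)] at hmem
    obtain ⟨h1, h2⟩ := hmem
    have hlt : ξ < 0 := lt_of_le_of_ne h2 hne
    have hua : u (x + ξ) = 1 := hu1 _ (by linarith) (by linarith)
    simp only [hf_def]
    rw [hua, Real.sign_of_neg hlt, abs_of_neg hlt]
    ring
  have hg_left : IntervalIntegrable (fun ξ => -Fr (-ξ)) volume (-r) 0 := by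
    have h1 : IntervalIntegrable (fun ξ : ℝ => Fr (-ξ)) volume (-0) (-r) :=
      (IntervalIntegrable.iff_comp_neg (f := Fr) (a := 0) (b := r)).1 hFint
    have h2 := h1.symm.neg
    simp only [neg_zero, neg_neg] at h2; exact h2
  have hleft_int : IntervalIntegrable f volume (-r) 0 := by
    rw [intervalIntegrable_iff] at hg_left ⊢
    refine hg_left.congr ?_
    filter_upwards [ae_restrict_of_ae hleft_eq,
      ae_restrict_mem measurableSet_uIoc] with ξ h1 h2
    exact (h1 h2).symm
  have hleft_val : ∫ ξ in (-r)..0, f ξ = -∫ ρ in (0 : ℝ)..r, Fr ρ := by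
    rw [intervalIntegral.integral_congr_ae hleft_eq]
    rw [intervalIntegral.integral_neg]
    congr 1
    have := intervalIntegral.integral_comp_neg (a := -r) (b := 0) (f := Fr)
    simpa using this
  -- right piece: f equals the indicator of Ioo 0 s a.e. on (0, r]
  have hright_eq : ∀ᵐ ξ : ℝ, ξ ∈ Set.uIoc 0 r →
      f ξ = Set.indicator (Set.Ioo 0 s) Fr ξ := by
    filter_upwards [hnes] with ξ hne hmem
    rw [Set.uIoc_of_le hr0.le] at hmem
    obtain ⟨h1, h2⟩ := hmem
    simp only [hf_def]
    rw [Real.sign_of_pos h1, abs_of_pos h1]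
    rcases lt_or_gt_of_ne hne with hlt | hgt
    · have hua : u (x + ξ) = 1 := hu1 _ (by linarith) (by simp only [hs_def] at hlt; linarith)
      rw [hua, Set.indicator_of_mem (Set.mem_Ioo.2 ⟨h1, hlt⟩)]
      ring
    · have hua : u (x + ξ) = 0 := hu0 _ (by simp only [hs_def] at hgt; linarith)
      rw [hua, Set.indicator_of_notMem (by simp only [Set.mem_Ioo, not_and, not_lt]; exact fun _ => hgt.le)]
      ring
  have hg_right : IntervalIntegrable (Set.indicator (Set.Ioo 0 s) Fr) volume 0 r := by
    rw [intervalIntegrable_iff]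
    refine Integrable.integrableOn ?_
    exact (hF.mono_set (Set.Ioo_subset_Ioo le_rfl hsr.le)).integrable_indicator
      measurableSet_Ioo
  have hright_int : IntervalIntegrable f volume 0 r := by
    rw [intervalIntegrable_iff] at hg_right ⊢
    refine hg_right.congr ?_
    filter_upwards [ae_restrict_of_ae hright_eq,
      ae_restrict_mem measurableSet_uIoc] with ξ h1 h2
    exact (h1 h2).symm
  have hright_val : ∫ ξ in (0 : ℝ)..r, f ξ = ∫ ρ in (0 : ℝ)..s, Fr ρ := by
    rw [intervalIntegral.integral_congr_ae hright_eq]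
    rw [intervalIntegral.integral_of_le hr0.le, intervalIntegral.integral_of_le hs0.le]
    rw [setIntegral_indicator measurableSet_Ioo]
    have hset : Set.Ioc 0 r ∩ Set.Ioo 0 s = Set.Ioo 0 s :=
      Set.inter_eq_right.2 (fun ξ hξ => ⟨hξ.1, le_of_lt (hξ.2.trans hsr)⟩)
    rw [hset, integral_Ioc_eq_integral_Ioo]
  -- combine the two pieces
  have hsplit : ∫ ξ in (-r)..r, f ξ = (∫ ξ in (-r)..0, f ξ) + ∫ ξ in (0 : ℝ)..r, f ξ :=
    (intervalIntegral.integral_add_adjacent_intervals hleft_int hright_int).symm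
  -- positivity of the tail integral
  have hpos' : ∀ᵐ ξ ∂volume.restrict (Set.Ioc s r), 0 < Fr ξ := by
    have hglob : ∀ᵐ ξ : ℝ, ξ ∈ Set.Ioo (0 : ℝ) r → 0 < Fr ξ :=
      (ae_restrict_iff' measurableSet_Ioo).1 hFpos
    have hner : ∀ᵐ ξ : ℝ, ξ ≠ r := by
      refine ae_iff.2 ?_
      simp only [ne_eq, not_not, Set.setOf_eq_eq_singleton]
      exact Real.volume_singleton
    filter_upwards [ae_restrict_of_ae hglob, ae_restrict_of_ae hner,
      ae_restrict_mem measurableSet_Ioc] with ξ h1 h2 h3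
    exact h1 ⟨by linarith [h3.1], lt_of_le_of_ne h3.2 h2⟩
  have hnull : volume ({ξ : ℝ | ¬ 0 < Fr ξ} ∩ Set.Ioc s r) = 0 := by
    have := ae_iff.1 hpos'
    rwa [Measure.restrict_apply' measurableSet_Ioc] at this
  have hmeas_pos : 0 < volume (Function.support Fr ∩ Set.Ioc s r) := by
    have hsub : Set.Ioc s r ⊆
        (Function.support Fr ∩ Set.Ioc s r) ∪ ({ξ : ℝ | ¬ 0 < Fr ξ} ∩ Set.Ioc s r) := by
      intro ξ hξ
      by_cases h : Fr ξ = 0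
      · exact Or.inr ⟨by simp [h], hξ⟩
      · exact Or.inl ⟨h, hξ⟩
    have h1 : volume (Set.Ioc s r) ≤ volume (Function.support Fr ∩ Set.Ioc s r) := by
      calc volume (Set.Ioc s r)
          ≤ volume ((Function.support Fr ∩ Set.Ioc s r) ∪
            ({ξ : ℝ | ¬ 0 < Fr ξ} ∩ Set.Ioc s r)) := measure_mono hsub
        _ ≤ volume (Function.support Fr ∩ Set.Ioc s r) +
            volume ({ξ : ℝ | ¬ 0 < Fr ξ} ∩ Set.Ioc s r) := measure_union_le _ _
        _ = volume (Function.support Fr ∩ Set.Ioc s r) := by rw [hnull, add_zero]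
    refine lt_of_lt_of_le ?_ h1
    rw [Real.volume_Ioc]
    exact ENNReal.ofReal_pos.2 (by linarith)
  have htail_pos : 0 < ∫ ρ in s..r, Fr ρ := by
    have hnonneg : 0 ≤ᵐ[volume.restrict (Set.uIoc s r)] Fr := by
      rw [Set.uIoc_of_le hsr.le]
      filter_upwards [hpos'] with ξ h using h.le
    exact (intervalIntegral.integral_pos_iff_support_of_nonneg_ae' hnonneg hFsr).2
      ⟨hsr, hmeas_pos⟩
  have hadd : (∫ ρ in (0 : ℝ)..s, Fr ρ) + ∫ ρ in s..r, Fr ρ = ∫ ρ in (0 : ℝ)..r, Fr ρ :=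
    intervalIntegral.integral_add_adjacent_intervals hF0s hFsr
  have hT : ∫ ξ in (-r)..r, f ξ < 0 := by
    rw [hsplit, hleft_val, hright_val]
    linarith
  have hc : (0 : ℝ) < (2 * r ^ 2)⁻¹ := by positivity
  unfold adhesion1D
  exact mul_neg_of_pos_of_neg hc hT
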